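/- Let R be a commutative ring and 0 → M' →^f M →^g M'' → 0 a short exact sequence of R-modules. Then for every k ≥ 1 the induced map Λ^k g : Λ^k_R M → Λ^k_R M'' is surjective, and its kernel is the R-submodule of Λ^k_R M generated by all elements of the form f(m') ∧ x with m' ∈ M' and x ∈ Λ^{k-1}_R M. Equivalently, the sequence M' ⊗_R Λ^{k-1}_R M → Λ^k_R M → Λ^k_R M'' → 0, where the first map sends m' ⊗ x to f(m') ∧ x, is exact. -/
import Mathlib

open ExteriorAlgebra

section Aux

variable {R M' M M'' : Type*} [CommRing R]
    [AddCommGroup M'] [Module R M']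
    [AddCommGroup M] [Module R M]
    [AddCommGroup M''] [Module R M'']
    (f : M' →ₗ[R] M) (g : M →ₗ[R] M'')

/-- The submodule of `Λ^k M` generated by elements `ι (f m') * x`, `x ∈ Λ^{k-1} M`. -/
def auxKK (k : ℕ) : Submodule R (ExteriorAlgebra R M) :=
  Submodule.span R {z : ExteriorAlgebra R M |
    ∃ (m' : M') (x : ExteriorAlgebra R M),
      x ∈ ⋀[R]^(k-1) M ∧ z = ExteriorAlgebra.ι R (f m') * x}

lemma auxKK_mid {k : ℕ} (v : Fin (k+1) → M) (j : Fin (k+1))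
    (hv : v j ∈ LinearMap.range f) : ιMulti R (k+1) v ∈ auxKK f (k+1) := by
  obtain ⟨m', hm'⟩ := hv
  set σ : Equiv.Perm (Fin (k+1)) := Equiv.swap 0 j with hσ
  have hperm := AlternatingMap.map_perm (ιMulti R (k+1)) v σ
  have hmem : ιMulti R (k+1) (v ∘ σ) ∈ auxKK f (k+1) := by
    apply Submodule.subset_span
    refine ⟨m', ιMulti R k (Matrix.vecTail (v ∘ σ)), ?_, ?_⟩
    · have := ιMulti_range R k (M := M) (Set.mem_range_self (Matrix.vecTail (v ∘ σ)))
      simpa using this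
    · rw [ιMulti_succ_apply]
      have h0 : (v ∘ σ) 0 = f m' := by
        simp [hσ, Equiv.swap_apply_left, hm']
      rw [h0]
  rw [hperm] at hmem
  rcases Int.units_eq_one_or (Equiv.Perm.sign σ) with h | h <;> rw [h] at hmem
  · simpa using hmem
  · have : (-(ιMulti R (k+1)) v : ExteriorAlgebra R M) ∈ auxKK f (k+1) := by simpa using hmem
    simpa using Submodule.neg_mem _ this

lemma auxKK_update {k : ℕ} (v : Fin (k+1) → M) (j : Fin (k+1)) (x y : M)
    (hxy : x - y ∈ LinearMap.range f) :
    ιMulti R (k+1) (Function.update v j x) - ιMulti R (k+1) (Function.update v j y)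
      ∈ auxKK f (k+1) := by
  rw [← AlternatingMap.map_update_sub]
  exact auxKK_mid f _ j (by simpa using hxy)

lemma auxKK_congr {k : ℕ} (hfg : Function.Exact f g) (u w : Fin (k+1) → M)
    (h : ∀ i, g (u i) = g (w i)) :
    ιMulti R (k+1) u - ιMulti R (k+1) w ∈ auxKK f (k+1) := by
  have hrange : ∀ i, u i - w i ∈ LinearMap.range f := by
    intro i
    have : g (u i - w i) = 0 := by rw [map_sub, h i, sub_self]
    simpa [Set.mem_range] using (hfg (u i - w i)).1 this
  have main : ∀ j : ℕ, j ≤ k + 1 →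
      ιMulti R (k+1) (fun i => if (i : ℕ) < j then u i else w i) - ιMulti R (k+1) w
        ∈ auxKK f (k+1) := by
    intro j hj
    induction j with
    | zero => simpa using Submodule.zero_mem _
    | succ j ih =>
      have hj' : j < k + 1 := hj
      set jj : Fin (k+1) := ⟨j, hj'⟩ with hjj
      set vj : Fin (k+1) → M := fun i => if (i : ℕ) < j then u i else w i with hvj
      have h1 : (fun i : Fin (k+1) => if (i : ℕ) < j + 1 then u i else w i)
          = Function.update vj jj (u jj) := by
        funext i
        rcases eq_or_ne i jj with rfl | hne
        · simp [hvj, hjj]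
        · have hni : (i : ℕ) ≠ j := by
            intro hc
            exact hne (Fin.ext hc)
          have : ((i : ℕ) < j + 1) ↔ ((i : ℕ) < j) := by omega
          simp [Function.update_of_ne hne, hvj, this]
      have h2 : vj = Function.update vj jj (w jj) := by
        have : vj jj = w jj := by simp [hvj, hjj]
        rw [← this, Function.update_eq_self]
      have hstep : ιMulti R (k+1) (fun i : Fin (k+1) => if (i : ℕ) < j + 1 then u i else w i)
          - ιMulti R (k+1) vj ∈ auxKK f (k+1) := by
        rw [h1]
        nth_rewrite 2 [h2]
        exact auxKK_update f vj jj _ _ (hrange jj)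
      have := Submodule.add_mem _ hstep (ih (le_of_lt hj'))
      simpa [sub_add_sub_cancel] using this
  have := main (k+1) le_rfl
  have hu : (fun i : Fin (k+1) => if (i : ℕ) < k + 1 then u i else w i) = u := by
    funext i
    simp [i.isLt]
  rwa [hu] at this

variable (hg : Function.Surjective g) (hfg : Function.Exact f g)

/-- Auxiliary alternating map `M''^{k+1} → Λ^{k+1} M / K`. -/
noncomputable def auxAlpha (k : ℕ) : M'' [⋀^Fin (k+1)]→ₗ[R] (ExteriorAlgebra R M ⧸ auxKK f (k+1)) where
  toFun v := (auxKK f (k+1)).mkQ (ιMulti R (k+1) (fun i => Function.surjInv hg (v i)))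
  map_update_add' := by
    intro _ v j a b
    have hcomp : ∀ (x : M''), (fun i => Function.surjInv hg (Function.update v j x i))
        = Function.update (fun i => Function.surjInv hg (v i)) j (Function.surjInv hg x) := by
      intro x
      exact Function.comp_update (Function.surjInv hg) v j x
    simp only [hcomp]
    set sv : Fin (k+1) → M := fun i => Function.surjInv hg (v i)
    have key : (auxKK f (k+1)).mkQ (ιMulti R (k+1)
          (Function.update sv j (Function.surjInv hg (a + b))))
        = (auxKK f (k+1)).mkQ (ιMulti R (k+1)
          (Function.update sv j (Function.surjInv hg a + Function.surjInv hg b))) := by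
      rw [← sub_eq_zero, ← map_sub, Submodule.mkQ_apply, Submodule.Quotient.mk_eq_zero]
      apply auxKK_congr f g hfg
      intro i
      rcases eq_or_ne i j with rfl | hne
      · simp [Function.surjInv_eq hg]
      · simp [Function.update_of_ne hne]
    rw [key, AlternatingMap.map_update_add, map_add]
  map_update_smul' := by
    intro _ v j c a
    have hcomp : ∀ (x : M''), (fun i => Function.surjInv hg (Function.update v j x i))
        = Function.update (fun i => Function.surjInv hg (v i)) j (Function.surjInv hg x) := by
      intro x
      exact Function.comp_update (Function.surjInv hg) v j x
    simp only [hcomp]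
    set sv : Fin (k+1) → M := fun i => Function.surjInv hg (v i)
    have key : (auxKK f (k+1)).mkQ (ιMulti R (k+1)
          (Function.update sv j (Function.surjInv hg (c • a))))
        = (auxKK f (k+1)).mkQ (ιMulti R (k+1)
          (Function.update sv j (c • Function.surjInv hg a))) := by
      rw [← sub_eq_zero, ← map_sub, Submodule.mkQ_apply, Submodule.Quotient.mk_eq_zero]
      apply auxKK_congr f g hfg
      intro i
      rcases eq_or_ne i j with rfl | hne
      · simp [Function.surjInv_eq hg]
      · simp [Function.update_of_ne hne]
    rw [key, AlternatingMap.map_update_smul, map_smul]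
  map_eq_zero_of_eq' := by
    intro v i j hij hne
    have h2 : (fun i => Function.surjInv hg (v i)) i = (fun i => Function.surjInv hg (v i)) j := by
      simp [hij]
    show (auxKK f (k+1)).mkQ (ιMulti R (k+1) (fun i => Function.surjInv hg (v i))) = 0
    rw [AlternatingMap.map_eq_zero_of_eq (ιMulti R (k+1)) _ h2 hne, map_zero]

end Aux

/-- For a short exact sequence `0 → M' →f M →g M'' → 0` of modules over a commutative ring `R`
and `k ≥ 1`, the induced map `Λ^k g : Λ^k M → Λ^k M''` (the restriction of the algebra map
`ExteriorAlgebra.map g` to the `k`-th exterior power) is surjective onto `Λ^k M''`, and its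
kernel is the submodule generated by the elements `f(m') ∧ x` with `m' ∈ M'` and
`x ∈ Λ^{k-1} M`; i.e. the sequence `M' ⊗ Λ^{k-1} M → Λ^k M → Λ^k M'' → 0` is exact. -/
theorem exteriorPower_map_surjective_and_ker_of_shortExact
    {R M' M M'' : Type*} [CommRing R]
    [AddCommGroup M'] [Module R M']
    [AddCommGroup M] [Module R M]
    [AddCommGroup M''] [Module R M'']
    (f : M' →ₗ[R] M) (g : M →ₗ[R] M'')
    (hf : Function.Injective f) (hg : Function.Surjective g)
    (hfg : Function.Exact f g) (k : ℕ) (hk : 1 ≤ k) :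
    Submodule.map (ExteriorAlgebra.map g).toLinearMap (⋀[R]^k M) = ⋀[R]^k M'' ∧
    (⋀[R]^k M) ⊓ LinearMap.ker (ExteriorAlgebra.map g).toLinearMap =
      Submodule.span R {z : ExteriorAlgebra R M |
        ∃ (m' : M') (x : ExteriorAlgebra R M),
          x ∈ ⋀[R]^(k-1) M ∧ z = ExteriorAlgebra.ι R (f m') * x} := by
  constructor
  · -- surjectivity
    show Submodule.map _ ((LinearMap.range (ι R : M →ₗ[R] _))^k) = _
    rw [Submodule.map_pow]
    congr 1
    rw [← LinearMap.range_comp, ExteriorAlgebra.map_comp_ι, LinearMap.range_comp_of_range_eq_top]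
    rwa [LinearMap.range_eq_top]
  · obtain ⟨n, rfl⟩ : ∃ n, k = n + 1 := ⟨k - 1, (Nat.succ_pred_eq_of_pos hk).symm⟩
    have hKK : Submodule.span R {z : ExteriorAlgebra R M |
        ∃ (m' : M') (x : ExteriorAlgebra R M),
          x ∈ ⋀[R]^(n+1-1) M ∧ z = ExteriorAlgebra.ι R (f m') * x} = auxKK f (n+1) := rfl
    rw [hKK]
    apply le_antisymm
    · -- hard direction: kernel ⊆ span
      -- set up the lift
      set fam : ∀ i, M'' [⋀^Fin i]→ₗ[R] (ExteriorAlgebra R M ⧸ auxKK f (n+1)) :=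
        Function.update (fun i => 0) (n+1) (auxAlpha f g hg hfg n) with hfam
      set Φ : ExteriorAlgebra R M'' →ₗ[R] (ExteriorAlgebra R M ⧸ auxKK f (n+1)) :=
        ExteriorAlgebra.liftAlternating fam with hΦ
    -- key: for y ∈ Λ^{n+1} M, Φ (map g y) = mkQ y
      have key : ∀ y ∈ ⋀[R]^(n+1) M,
          Φ ((ExteriorAlgebra.map g).toLinearMap y) = (auxKK f (n+1)).mkQ y := by
        intro y hy
        rw [← ExteriorAlgebra.ιMulti_span_fixedDegree] at hy
        induction hy using Submodule.span_induction with
        | mem z hz =>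
          obtain ⟨v, rfl⟩ := hz
          rw [AlgHom.toLinearMap_apply, ExteriorAlgebra.map_apply_ιMulti]
          have : Φ (ιMulti R (n+1) (g ∘ v)) = auxAlpha f g hg hfg n (g ∘ v) := by
            rw [hΦ, ExteriorAlgebra.liftAlternating_apply_ιMulti, hfam,
              Function.update_self]
          rw [this]
          show (auxKK f (n+1)).mkQ (ιMulti R (n+1) (fun i => Function.surjInv hg (g (v i)))) = _
          rw [← sub_eq_zero, ← map_sub, Submodule.mkQ_apply, Submodule.Quotient.mk_eq_zero]
          apply auxKK_congr f g hfg
          intro i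
          simp [Function.surjInv_eq hg]
        | zero => simp
        | add x y hx hy ihx ihy => rw [map_add, map_add, ihx, ihy, map_add]
        | smul c x hx ihx => rw [map_smul, map_smul, ihx, map_smul]
      rintro y ⟨hy1, hy2⟩
      have h0 : (ExteriorAlgebra.map g).toLinearMap y = 0 := hy2
      have := key y hy1
      rw [h0, map_zero] at this
      rw [← Submodule.Quotient.mk_eq_zero, ← Submodule.mkQ_apply, ← this]
    · -- easy direction: span ⊆ kernel ∩ Λ^{n+1}
      rw [auxKK, Submodule.span_le]
      rintro z ⟨m', x, hx, rfl⟩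
      constructor
      · show ι R (f m') * x ∈ (LinearMap.range (ι R : M →ₗ[R] _))^(n+1)
        rw [pow_succ']
        exact Submodule.mul_mem_mul (LinearMap.mem_range_self _ _) (by simpa using hx)
      · show (ExteriorAlgebra.map g) (ι R (f m') * x) = 0
        have : g (f m') = 0 := (hfg (f m')).2 ⟨m', rfl⟩
        rw [map_mul, ExteriorAlgebra.map_apply_ι, this, map_zero, zero_mul]
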